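/- For every pair of real constants m, x₀ > 0, the circular 3-web on the unit sphere with polar curve Γ is hexagonal; precisely, there exist nonempty open intervals I₁, I₂, I₃ ⊆ ℝ and continuous strictly monotone functions φᵢ : Iᵢ → ℝ (i = 1,2,3) such that: (i) for every (t₁, t₂) ∈ I₁ × I₂ there exists t₃ ∈ I₃ for which the three points Γ(t₁), Γ(t₂), Γ(t₃) lie on a common plane tangent to the quadric X²+Y²+Z² = U², i.e. there exists (a,b,c,d) ≠ (0,0,0,0) in ℝ⁴ with a² + b² + c² = d² and a·X(tᵢ) + b·Y(tᵢ) + c·Z(tᵢ) + d·U(tᵢ) = 0 for i = 1,2,3; and (ii) whenever tᵢ ∈ Iᵢ (i = 1,2,3) are such that Γ(t₁), Γ(t₂), Γ(t₃) lie on a common tangent plane of the quadric, then φ₁(t₁) + φ₂(t₂) + φ₃(t₃) = 0 (an abelian relation, expressing vanishing of the Blaschke curvature via the converse of Abel's theorem). -/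

import Mathlib

/-- The components of the twisted cubic `Γ(t) = (m(t²−1), t(t²−1), m·x₀·t, m·x₀·t²)`. -/
def gammaAff (m x₀ t : ℝ) : Fin 4 → ℝ :=
  ![m * (t ^ 2 - 1), t * (t ^ 2 - 1), m * x₀ * t, m * x₀ * t ^ 2]

/-- The three points `Γ(t₁), Γ(t₂), Γ(t₃)` lie on a common plane
`{a·X + b·Y + c·Z + d·U = 0}` tangent to the Möbius quadric `X²+Y²+Z² = U²`
(tangency of the plane being `a² + b² + c² = d²`, with `(a,b,c,d) ≠ (0,0,0,0)`). -/
def OnCommonTangentPlane (m x₀ t₁ t₂ t₃ : ℝ) : Prop :=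
  ∃ a b c d : ℝ, ¬(a = 0 ∧ b = 0 ∧ c = 0 ∧ d = 0) ∧ a ^ 2 + b ^ 2 + c ^ 2 = d ^ 2 ∧
    a * gammaAff m x₀ t₁ 0 + b * gammaAff m x₀ t₁ 1 + c * gammaAff m x₀ t₁ 2
      + d * gammaAff m x₀ t₁ 3 = 0 ∧
    a * gammaAff m x₀ t₂ 0 + b * gammaAff m x₀ t₂ 1 + c * gammaAff m x₀ t₂ 2
      + d * gammaAff m x₀ t₂ 3 = 0 ∧
    a * gammaAff m x₀ t₃ 0 + b * gammaAff m x₀ t₃ 1 + c * gammaAff m x₀ t₃ 2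
      + d * gammaAff m x₀ t₃ 3 = 0

set_option maxHeartbeats 4000000

/-- Key polynomial identity on the web surface. -/
lemma key_ident (m x0 r u1 u2 u3 : ℝ)
    (hr2 : r ^ 2 = (1 - m ^ 2 + m ^ 2 * x0 ^ 2) * r + m ^ 2)
    (hF : x0 ^ 2 * (u1 * u2 * u3) + m ^ 2 * x0 ^ 2
        + (1 - u1) * (1 - u2) * (1 - u3) = 0) :
    ((1 - m ^ 2 + m ^ 2 * x0 ^ 2 - r) * ((1 - m ^ 2 + m ^ 2 * x0 ^ 2 - r) - 1))
        * ((u1 - r) * (u2 - r) * (u3 - r))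
      = (r * (r - 1)) * ((u1 - (1 - m ^ 2 + m ^ 2 * x0 ^ 2 - r))
        * (u2 - (1 - m ^ 2 + m ^ 2 * x0 ^ 2 - r))
        * (u3 - (1 - m ^ 2 + m ^ 2 * x0 ^ 2 - r))) := by
  linear_combination
    (-(m ^ 2) * (r - (1 - m ^ 2 + m ^ 2 * x0 ^ 2 - r))) * hF +
    (1 - u3 - u2 + u2*u3 - u1 + u1*u3 + u1*u2 - 3*r + 2*r*u3 + 2*r*u2 - 2*r*u2*u3
      + 2*r*u1 - 2*r*u1*u3 - 2*r*u1*u2 + 3*r^2 - 2*r^3 - m^2 + m^2*u3 + m^2*u2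
      - m^2*u2*u3 + m^2*u1 - m^2*u1*u3 - m^2*u1*u2 + 2*m^2*r - 3*m^2*r^2
      + 2*m^2*x0^2 - m^2*x0^2*u3 - m^2*x0^2*u2 + m^2*x0^2*u2*u3 - m^2*x0^2*u1
      + m^2*x0^2*u1*u3 + m^2*x0^2*u1*u2 - 4*m^2*x0^2*r + 3*m^2*x0^2*r^2
      - m^4*r - m^4*x0^2 + 2*m^4*x0^2*r + m^4*x0^4 - m^4*x0^4*r) * hr2

/-- Vieta: three distinct points on a common tangent plane satisfy the web relation. -/
lemma vieta_web (m x0 t1 t2 t3 : ℝ) (hm : 0 < m) (hx : 0 < x0)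
    (h12 : t1 ≠ t2) (h13 : t1 ≠ t3) (h23 : t2 ≠ t3)
    (h : OnCommonTangentPlane m x0 t1 t2 t3) :
    x0 ^ 2 * (t1 ^ 2 * (t2 ^ 2 * t3 ^ 2)) + m ^ 2 * x0 ^ 2
      + (1 - t1 ^ 2) * (1 - t2 ^ 2) * (1 - t3 ^ 2) = 0 := by
  obtain ⟨a, b, c, d, h0, htan, e1, e2, e3⟩ := h
  simp only [gammaAff, Matrix.cons_val_zero, Matrix.cons_val_one, Matrix.head_cons,
    Matrix.cons_val_two, Matrix.tail_cons, Matrix.cons_val_three] at e1 e2 e3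
  have hm' : m ≠ 0 := ne_of_gt hm
  have hx' : x0 ≠ 0 := ne_of_gt hx
  have hb : b ≠ 0 := by
    intro hb0
    subst hb0
    have g12 : (a * m + d * (m * x0)) * (t1 + t2) + c * (m * x0) = 0 := by
      have h' : (t1 - t2) * ((a * m + d * (m * x0)) * (t1 + t2) + c * (m * x0)) = 0 := by
        linear_combination e1 - e2
      exact (mul_eq_zero.mp h').resolve_left (sub_ne_zero.mpr h12)
    have g13 : (a * m + d * (m * x0)) * (t1 + t3) + c * (m * x0) = 0 := by
      have h' : (t1 - t3) * ((a * m + d * (m * x0)) * (t1 + t3) + c * (m * x0)) = 0 := by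
        linear_combination e1 - e3
      exact (mul_eq_zero.mp h').resolve_left (sub_ne_zero.mpr h13)
    have gX : a * m + d * (m * x0) = 0 := by
      have h' : (t2 - t3) * (a * m + d * (m * x0)) = 0 := by linear_combination g12 - g13
      exact (mul_eq_zero.mp h').resolve_left (sub_ne_zero.mpr h23)
    have gc : c = 0 := by
      have : c * (m * x0) = 0 := by linear_combination g12 - (t1 + t2) * gX
      rcases mul_eq_zero.mp this with h' | h'
      · exact h'
      · exact absurd h' (mul_ne_zero hm' hx')
    have ga : a = 0 := by
      have : a * m = 0 := by
        linear_combination t1 ^ 2 * gX - e1 + (m * x0 * t1) * gc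
      exact (mul_eq_zero.mp this).resolve_right hm'
    have gd : d = 0 := by
      have : d * (m * x0) = 0 := by linear_combination gX - m * ga
      exact (mul_eq_zero.mp this).resolve_right (mul_ne_zero hm' hx')
    exact h0 ⟨ga, rfl, gc, gd⟩
  have g12 : b * (t1 ^ 2 + t1 * t2 + t2 ^ 2) + (a * m + d * (m * x0)) * (t1 + t2)
      + (c * (m * x0) - b) = 0 := by
    have h' : (t1 - t2) * (b * (t1 ^ 2 + t1 * t2 + t2 ^ 2)
        + (a * m + d * (m * x0)) * (t1 + t2) + (c * (m * x0) - b)) = 0 := by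
      linear_combination e1 - e2
    exact (mul_eq_zero.mp h').resolve_left (sub_ne_zero.mpr h12)
  have g13 : b * (t1 ^ 2 + t1 * t3 + t3 ^ 2) + (a * m + d * (m * x0)) * (t1 + t3)
      + (c * (m * x0) - b) = 0 := by
    have h' : (t1 - t3) * (b * (t1 ^ 2 + t1 * t3 + t3 ^ 2)
        + (a * m + d * (m * x0)) * (t1 + t3) + (c * (m * x0) - b)) = 0 := by
      linear_combination e1 - e3
    exact (mul_eq_zero.mp h').resolve_left (sub_ne_zero.mpr h13)
  have gB : a * m + d * (m * x0) = -b * (t1 + t2 + t3) := by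
    have h' : (t2 - t3) * (a * m + d * (m * x0) + b * (t1 + t2 + t3)) = 0 := by
      linear_combination g12 - g13
    have := (mul_eq_zero.mp h').resolve_left (sub_ne_zero.mpr h23)
    linarith [this]
  have gC : c * (m * x0) - b = b * (t1 * t2 + t1 * t3 + t2 * t3) := by
    linear_combination g12 - (t1 + t2) * gB
  have gD : a * m = b * (t1 * (t2 * t3)) := by
    linear_combination -e1 + t1 ^ 2 * gB + t1 * gC
  have key : b ^ 2 * (x0 ^ 2 * (t1 ^ 2 * (t2 ^ 2 * t3 ^ 2)) + m ^ 2 * x0 ^ 2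
      + (1 - t1 ^ 2) * (1 - t2 ^ 2) * (1 - t3 ^ 2)) = 0 := by
    linear_combination (m ^ 2 * x0 ^ 2) * htan
      - (x0 ^ 2 * (a * m + b * (t1 * (t2 * t3)))) * gD
      - (c * (m * x0) + b + b * (t1 * t2 + t1 * t3 + t2 * t3)) * gC
      + (d * (m * x0) - b * (t1 + t2 + t3) - b * (t1 * (t2 * t3))) * (gB - gD)
  exact (mul_eq_zero.mp key).resolve_left (pow_ne_zero 2 hb)

lemma web_to_plane (m x0 t1 t2 t3 : ℝ) (hm : 0 < m) (hx : 0 < x0)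
    (hF : x0 ^ 2 * (t1 ^ 2 * (t2 ^ 2 * t3 ^ 2)) + m ^ 2 * x0 ^ 2
      + (1 - t1 ^ 2) * (1 - t2 ^ 2) * (1 - t3 ^ 2) = 0) :
    OnCommonTangentPlane m x0 t1 t2 t3 := by
  have hm' : m ≠ 0 := ne_of_gt hm
  have hx' : x0 ≠ 0 := ne_of_gt hx
  refine ⟨t1 * t2 * t3 / m, 1, (1 + (t1 * t2 + t1 * t3 + t2 * t3)) / (m * x0),
    -((t1 + t2 + t3) + t1 * t2 * t3) / (m * x0), ?_, ?_, ?_, ?_, ?_⟩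
  · rintro ⟨-, h1, -, -⟩; exact one_ne_zero h1
  · field_simp
    linear_combination hF
  · simp only [gammaAff, Matrix.cons_val_zero, Matrix.cons_val_one, Matrix.head_cons,
      Matrix.cons_val_two, Matrix.tail_cons, Matrix.cons_val_three]
    field_simp
    ring
  · simp only [gammaAff, Matrix.cons_val_zero, Matrix.cons_val_one, Matrix.head_cons,
      Matrix.cons_val_two, Matrix.tail_cons, Matrix.cons_val_three]
    field_simp
    ring
  · simp only [gammaAff, Matrix.cons_val_zero, Matrix.cons_val_one, Matrix.head_cons,
      Matrix.cons_val_two, Matrix.tail_cons, Matrix.cons_val_three]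
    field_simp
    ring


/-- Monotone branch lemma for the first two foliations. -/
lemma phi12_good (lo hi r rp ε : ℝ) (hlo : 0 < lo) (hεle : ε ≤ 1 / 8)
    (hrpneg : rp < 0) (hr1 : 1 < r)
    (bnd : ∀ t ∈ Set.Ioo lo hi, 0 < t ^ 2 ∧ t ^ 2 < ε) :
    ContinuousOn (fun t => Real.log ((r - t ^ 2) / (t ^ 2 - rp))) (Set.Ioo lo hi) ∧
      (StrictMonoOn (fun t => Real.log ((r - t ^ 2) / (t ^ 2 - rp))) (Set.Ioo lo hi) ∨
       StrictAntiOn (fun t => Real.log ((r - t ^ 2) / (t ^ 2 - rp))) (Set.Ioo lo hi)) := by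
  constructor
  · apply ContinuousOn.log
    · apply ContinuousOn.div (continuous_const.sub (continuous_pow 2)).continuousOn
        ((continuous_pow 2).sub continuous_const).continuousOn
      intro t ht
      have hb := bnd t ht
      have : 0 < t ^ 2 - rp := by linarith [hb.1]
      exact ne_of_gt this
    · intro t ht
      have hb := bnd t ht
      have h1 : 0 < r - t ^ 2 := by linarith [hb.2]
      have h2 : 0 < t ^ 2 - rp := by linarith [hb.1]
      exact ne_of_gt (div_pos h1 h2)
  · right
    intro s1 hs1 t ht hst
    have hbs := bnd s1 hs1
    have hbt := bnd t ht
    have hs0 : 0 < s1 := lt_trans hlo hs1.1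
    have hsq : s1 ^ 2 < t ^ 2 := by nlinarith [hst, hs0]
    have h1t : 0 < r - t ^ 2 := by linarith [hbt.2]
    have h2t : 0 < t ^ 2 - rp := by linarith [hbt.1]
    have h1s : 0 < r - s1 ^ 2 := by linarith [hbs.2]
    have h2s : 0 < s1 ^ 2 - rp := by linarith [hbs.1]
    apply Real.log_lt_log (div_pos h1t h2t)
    rw [div_lt_div_iff₀ h2t h2s]
    nlinarith [mul_pos (sub_pos.mpr hsq) (show (0:ℝ) < r - rp by linarith)]

/-- Monotone branch lemma for the third foliation. -/
lemma phi3_good (lo hi r rp cc : ℝ) (hlo : 0 < lo)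
    (hrpneg : rp < 0) (hr1 : 1 < r)
    (bnd : ∀ t ∈ Set.Ioo lo hi, r < t ^ 2) :
    ContinuousOn (fun t => Real.log ((t ^ 2 - r) / (t ^ 2 - rp)) - Real.log cc)
        (Set.Ioo lo hi) ∧
      (StrictMonoOn (fun t => Real.log ((t ^ 2 - r) / (t ^ 2 - rp)) - Real.log cc)
          (Set.Ioo lo hi) ∨
       StrictAntiOn (fun t => Real.log ((t ^ 2 - r) / (t ^ 2 - rp)) - Real.log cc)
          (Set.Ioo lo hi)) := by
  constructor
  · apply ContinuousOn.sub _ continuousOn_const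
    apply ContinuousOn.log
    · apply ContinuousOn.div ((continuous_pow 2).sub continuous_const).continuousOn
        ((continuous_pow 2).sub continuous_const).continuousOn
      intro t ht
      have hb := bnd t ht
      have : 0 < t ^ 2 - rp := by linarith [hb]
      exact ne_of_gt this
    · intro t ht
      have hb := bnd t ht
      have h1 : 0 < t ^ 2 - r := by linarith
      have h2 : 0 < t ^ 2 - rp := by linarith [hb]
      exact ne_of_gt (div_pos h1 h2)
  · left
    intro s1 hs1 t ht hst
    have hbs := bnd s1 hs1
    have hbt := bnd t ht
    have hs0 : 0 < s1 := lt_trans hlo hs1.1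
    have hsq : s1 ^ 2 < t ^ 2 := by nlinarith [hst, hs0]
    have h1t : 0 < t ^ 2 - r := by linarith
    have h2t : 0 < t ^ 2 - rp := by linarith [hbt]
    have h1s : 0 < s1 ^ 2 - r := by linarith
    have h2s : 0 < s1 ^ 2 - rp := by linarith [hbs]
    have hlog : Real.log ((s1 ^ 2 - r) / (s1 ^ 2 - rp))
        < Real.log ((t ^ 2 - r) / (t ^ 2 - rp)) := by
      apply Real.log_lt_log (div_pos h1s h2s)
      rw [div_lt_div_iff₀ h2s h2t]
      nlinarith [mul_pos (sub_pos.mpr hsq) (show (0:ℝ) < r - rp by linarith)]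
    have : Real.log ((s1 ^ 2 - r) / (s1 ^ 2 - rp)) - Real.log cc
        < Real.log ((t ^ 2 - r) / (t ^ 2 - rp)) - Real.log cc := by linarith
    simpa using this

/-- Construction of the third parameter value. -/
lemma third_point (m x₀ K S r rp ε t1 t2 : ℝ) (hm : 0 < m) (hx₀ : 0 < x₀)
    (hKdef : K = m ^ 2 * x₀ ^ 2) (hSdef : S = 1 - m ^ 2 + K)
    (hr2 : r ^ 2 = S * r + m ^ 2) (hrpdef : rp = S - r)
    (hrpneg : rp < 0) (hK : 0 < K)
    (hεle : ε ≤ 1 / 8) (hx2ε : x₀ ^ 2 * ε ≤ 1 / 8) (hKε : (1 + K) * ε ≤ 1 / 8)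
    (hu1p : 0 < t1 ^ 2) (hu1ε : t1 ^ 2 < ε) (hu2p : 0 < t2 ^ 2) (hu2ε : t2 ^ 2 < ε) :
    ∃ u3 : ℝ, r < u3 ∧ u3 < K + 2 ∧
      x₀ ^ 2 * (t1 ^ 2 * (t2 ^ 2 * u3)) + m ^ 2 * x₀ ^ 2
        + (1 - t1 ^ 2) * (1 - t2 ^ 2) * (1 - u3) = 0 := by
  have hq34 : (3:ℝ)/4 ≤ (1 - t1 ^ 2) * (1 - t2 ^ 2) := by
    nlinarith [hεle, mul_pos hu1p hu2p]
  have hq1 : (1 - t1 ^ 2) * (1 - t2 ^ 2) ≤ 1 := by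
    nlinarith [hu1p, hu2p, mul_pos hu1p hu2p]
  have a1 : x₀ ^ 2 * t1 ^ 2 ≤ 1 / 8 := by nlinarith [hx2ε, hu1ε, sq_nonneg x₀]
  have a2 : t2 ^ 2 ≤ 1 / 8 := by linarith
  have hxu : x₀ ^ 2 * (t1 ^ 2 * t2 ^ 2) ≤ 1 / 64 := by
    nlinarith [mul_le_mul a1 a2 hu2p.le (by linarith : (0:ℝ) ≤ 1/8)]
  have hxu0 : 0 ≤ x₀ ^ 2 * (t1 ^ 2 * t2 ^ 2) := by positivity
  have hdenpos : 0 < (1 - t1 ^ 2) * (1 - t2 ^ 2) - x₀ ^ 2 * (t1 ^ 2 * t2 ^ 2) := by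
    linarith
  refine ⟨(K + (1 - t1 ^ 2) * (1 - t2 ^ 2))
      / ((1 - t1 ^ 2) * (1 - t2 ^ 2) - x₀ ^ 2 * (t1 ^ 2 * t2 ^ 2)), ?_, ?_, ?_⟩
  · -- r < u3
    set u3 : ℝ := (K + (1 - t1 ^ 2) * (1 - t2 ^ 2))
        / ((1 - t1 ^ 2) * (1 - t2 ^ 2) - x₀ ^ 2 * (t1 ^ 2 * t2 ^ 2)) with hu3def
    clear_value u3
    have hu3pos : 0 < u3 := by
      rw [hu3def]; exact div_pos (by linarith) hdenpos
    have hu3low : 1 + K ≤ u3 := by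
      rw [hu3def, le_div_iff₀ hdenpos]
      nlinarith [mul_le_mul_of_nonneg_left hq1 hK.le, hxu0, hK]
    have hQ : 0 < (u3 - r) * (u3 - rp) := by
      have hid : (u3 - r) * (u3 - rp) = (u3 - 1 - K) * (u3 + m ^ 2) + K * m ^ 2 := by
        rw [hrpdef]
        linear_combination (-u3) * hSdef - hr2
      rw [hid]
      nlinarith [hu3low, hK, mul_pos hm hm, hu3pos,
        mul_nonneg (by linarith : (0:ℝ) ≤ u3 - 1 - K)
          (by nlinarith [hu3pos, sq_nonneg m] : (0:ℝ) ≤ u3 + m ^ 2)]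
    nlinarith [hQ, show 0 < u3 - rp by linarith]
  · -- u3 < K + 2
    have c1 : (1 + K) * t1 ^ 2 ≤ 1 / 8 := by nlinarith [hKε, hu1ε, hK]
    have c2 : (1 + K) * t2 ^ 2 ≤ 1 / 8 := by nlinarith [hKε, hu2ε, hK]
    have b2 : x₀ ^ 2 * t2 ^ 2 ≤ 1 / 8 := by nlinarith [hx2ε, hu2ε, sq_nonneg x₀]
    have c3 : (K + 2) * t1 ^ 2 * (x₀ ^ 2 * t2 ^ 2) ≤ 1 / 16 := by
      have d1 : (K + 2) * t1 ^ 2 ≤ 1 / 2 := by nlinarith [c1, hu1p]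
      nlinarith [mul_le_mul d1 b2 (by positivity) (by linarith : (0:ℝ) ≤ 1/2)]
    have c4 : 0 ≤ (1 + K) * (t1 ^ 2 * t2 ^ 2) := by
      apply mul_nonneg (by linarith) (by positivity)
    rw [div_lt_iff₀ hdenpos]
    nlinarith [c1, c2, c3, c4]
  · -- the web relation
    have hu3den : (K + (1 - t1 ^ 2) * (1 - t2 ^ 2))
        / ((1 - t1 ^ 2) * (1 - t2 ^ 2) - x₀ ^ 2 * (t1 ^ 2 * t2 ^ 2))
        * ((1 - t1 ^ 2) * (1 - t2 ^ 2) - x₀ ^ 2 * (t1 ^ 2 * t2 ^ 2))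
        = K + (1 - t1 ^ 2) * (1 - t2 ^ 2) :=
      div_mul_cancel₀ _ (ne_of_gt hdenpos)
    linear_combination -hu3den - hKdef


/-- for every `m, x₀ > 0` the circular 3-web on the unit sphere with polar
curve `Γ` is hexagonal: there are nonempty open intervals `I₁, I₂, I₃ ⊆ ℝ` and continuous
strictly monotone functions `φᵢ : Iᵢ → ℝ` such that (i) for every `(t₁,t₂) ∈ I₁ × I₂`
some `t₃ ∈ I₃` puts `Γ(t₁), Γ(t₂), Γ(t₃)` on a common tangent plane of the Möbius
quadric, and (ii) whenever `tᵢ ∈ Iᵢ` and `Γ(t₁), Γ(t₂), Γ(t₃)` lie on a common tangent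
plane, then `φ₁(t₁) + φ₂(t₂) + φ₃(t₃) = 0` (an abelian relation: vanishing of the
Blaschke curvature via the converse of Abel's theorem). -/
theorem twisted_cubic_web_is_hexagonal (m x₀ : ℝ) (hm : 0 < m) (hx₀ : 0 < x₀) :
    ∃ (a₁ b₁ a₂ b₂ a₃ b₃ : ℝ) (φ₁ φ₂ φ₃ : ℝ → ℝ),
      a₁ < b₁ ∧ a₂ < b₂ ∧ a₃ < b₃ ∧
      (ContinuousOn φ₁ (Set.Ioo a₁ b₁) ∧
        (StrictMonoOn φ₁ (Set.Ioo a₁ b₁) ∨ StrictAntiOn φ₁ (Set.Ioo a₁ b₁))) ∧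
      (ContinuousOn φ₂ (Set.Ioo a₂ b₂) ∧
        (StrictMonoOn φ₂ (Set.Ioo a₂ b₂) ∨ StrictAntiOn φ₂ (Set.Ioo a₂ b₂))) ∧
      (ContinuousOn φ₃ (Set.Ioo a₃ b₃) ∧
        (StrictMonoOn φ₃ (Set.Ioo a₃ b₃) ∨ StrictAntiOn φ₃ (Set.Ioo a₃ b₃))) ∧
      (∀ t₁ ∈ Set.Ioo a₁ b₁, ∀ t₂ ∈ Set.Ioo a₂ b₂,
        ∃ t₃ ∈ Set.Ioo a₃ b₃, OnCommonTangentPlane m x₀ t₁ t₂ t₃) ∧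
      (∀ t₁ ∈ Set.Ioo a₁ b₁, ∀ t₂ ∈ Set.Ioo a₂ b₂, ∀ t₃ ∈ Set.Ioo a₃ b₃,
        OnCommonTangentPlane m x₀ t₁ t₂ t₃ → φ₁ t₁ + φ₂ t₂ + φ₃ t₃ = 0) := by
  set K : ℝ := m ^ 2 * x₀ ^ 2 with hKdef
  set S : ℝ := 1 - m ^ 2 + K with hSdef
  have hK : 0 < K := by positivity
  have hw0 : (0:ℝ) ≤ S ^ 2 + 4 * m ^ 2 := by positivity
  set w : ℝ := Real.sqrt (S ^ 2 + 4 * m ^ 2) with hwdef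
  have hw2 : w ^ 2 = S ^ 2 + 4 * m ^ 2 := Real.sq_sqrt hw0
  have hwnn : 0 ≤ w := Real.sqrt_nonneg _
  set r : ℝ := (S + w) / 2 with hrdef
  have hr2 : r ^ 2 = S * r + m ^ 2 := by
    rw [hrdef]; ring_nf; linear_combination (1/4 : ℝ) * hw2
  have hrpos : 0 < r := by
    rw [hrdef]
    nlinarith [hw2, hwnn, mul_pos hm hm]
  have hrprod : r * (S - r) = -m ^ 2 := by linear_combination -hr2
  have hrpneg : S - r < 0 := by nlinarith [hrprod, hrpos, mul_pos hm hm]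
  have hr1 : 1 < r := by nlinarith [hr2, hrpneg, hK]
  have hrK2 : r < K + 2 := by nlinarith [hr2, hrpneg, mul_pos hm hm, hK]
  set rp : ℝ := S - r with hrpdef
  have hcc_den_pos : 0 < rp * (rp - 1) := by nlinarith [hrpneg]
  have hcc_num_pos : 0 < r * (r - 1) := by nlinarith [hr1]
  set cc : ℝ := r * (r - 1) / (rp * (rp - 1)) with hccdef
  have hccpos : 0 < cc := div_pos hcc_num_pos hcc_den_pos
  set ε : ℝ := 1 / (8 * (1 + K) * (1 + x₀ ^ 2)) with hεdef
  have hε : 0 < ε := by positivity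
  have hε8 : ε * (8 * (1 + K) * (1 + x₀ ^ 2)) = 1 := by
    rw [hεdef]
    exact one_div_mul_cancel (by positivity)
  have hεle : ε ≤ 1 / 8 := by
    nlinarith [hε8, hε, mul_pos hK hε, mul_nonneg (sq_nonneg x₀) hε.le,
      mul_nonneg (mul_nonneg hK.le (sq_nonneg x₀)) hε.le]
  have hx2ε : x₀ ^ 2 * ε ≤ 1 / 8 := by
    nlinarith [hε8, hε, mul_pos hK hε, mul_nonneg (sq_nonneg x₀) hε.le,
      mul_nonneg (mul_nonneg hK.le (sq_nonneg x₀)) hε.le]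
  have hKε : (1 + K) * ε ≤ 1 / 8 := by
    nlinarith [hε8, hε, mul_pos hK hε, mul_nonneg (sq_nonneg x₀) hε.le,
      mul_nonneg (mul_nonneg hK.le (sq_nonneg x₀)) hε.le]
  set α : ℝ := Real.sqrt ε / 4 with hαdef
  have hα : 0 < α := by
    rw [hαdef]; positivity
  have hα2 : (4 * α) ^ 2 = ε := by
    rw [hαdef]; rw [show (4 * (Real.sqrt ε / 4)) ^ 2 = Real.sqrt ε ^ 2 by ring]
    exact Real.sq_sqrt hε.le
  have h4α1 : 4 * α < 1 := by
    rw [hαdef]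
    have : Real.sqrt ε < 1 := by
      rw [show (1:ℝ) = Real.sqrt 1 by simp]
      exact Real.sqrt_lt_sqrt hε.le (by linarith)
    linarith
  have hr2' : r ^ 2 = S * r + m ^ 2 := hr2
  clear_value K S w r rp cc ε α
  clear hεdef hε8 hwdef hw2 hw0 hwnn hrdef hαdef w hr2'
  have sq_bound1 : ∀ t ∈ Set.Ioo α (2 * α), 0 < t ^ 2 ∧ t ^ 2 < ε := by
    intro t ht
    have h1 : 0 < t := lt_trans hα ht.1
    constructor
    · positivity
    · nlinarith [ht.2, hα2, h1, hα]
  have sq_bound2 : ∀ t ∈ Set.Ioo (3 * α) (4 * α), 0 < t ^ 2 ∧ t ^ 2 < ε := by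
    intro t ht
    have h1 : 0 < t := by nlinarith [ht.1, hα]
    constructor
    · positivity
    · nlinarith [ht.2, hα2, h1]
  have sq_bound3 : ∀ t ∈ Set.Ioo (Real.sqrt r) (Real.sqrt (K + 2)), r < t ^ 2 := by
    intro t ht
    have h0 : 0 ≤ Real.sqrt r := Real.sqrt_nonneg r
    have h1 : Real.sqrt r < t := ht.1
    nlinarith [Real.sq_sqrt hrpos.le, h1, h0]
  refine ⟨α, 2 * α, 3 * α, 4 * α, Real.sqrt r, Real.sqrt (K + 2),
    (fun t => Real.log ((r - t ^ 2) / (t ^ 2 - rp))),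
    (fun t => Real.log ((r - t ^ 2) / (t ^ 2 - rp))),
    (fun t => Real.log ((t ^ 2 - r) / (t ^ 2 - rp)) - Real.log cc),
    by linarith, by linarith,
    Real.sqrt_lt_sqrt hrpos.le hrK2, ?_, ?_, ?_, ?_, ?_⟩
  · exact phi12_good α (2 * α) r rp ε hα hεle hrpneg hr1 sq_bound1
  · exact phi12_good (3 * α) (4 * α) r rp ε (by linarith) hεle hrpneg hr1 sq_bound2
  · exact phi3_good (Real.sqrt r) (Real.sqrt (K + 2)) r rp cc
      (Real.sqrt_pos.mpr hrpos) hrpneg hr1 sq_bound3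
  · -- existence of t₃
    intro t1 ht1 t2 ht2
    obtain ⟨hu1p, hu1ε⟩ := sq_bound1 t1 ht1
    obtain ⟨hu2p, hu2ε⟩ := sq_bound2 t2 ht2
    obtain ⟨u3, hrlt, hu3high, hFu⟩ := third_point m x₀ K S r rp ε t1 t2 hm hx₀
      hKdef hSdef hr2 hrpdef hrpneg hK hεle hx2ε hKε hu1p hu1ε hu2p hu2ε
    have hu3pos : 0 < u3 := lt_trans hrpos hrlt
    refine ⟨Real.sqrt u3, ⟨Real.sqrt_lt_sqrt hrpos.le hrlt,
      Real.sqrt_lt_sqrt hu3pos.le hu3high⟩, ?_⟩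
    apply web_to_plane m x₀ t1 t2 (Real.sqrt u3) hm hx₀
    rw [Real.sq_sqrt hu3pos.le]
    linear_combination hFu
  · -- abelian relation
    intro t1 ht1 t2 ht2 t3 ht3 hP
    have hsr1 : 1 < Real.sqrt r := by
      rw [show (1:ℝ) = Real.sqrt 1 by simp]
      exact Real.sqrt_lt_sqrt (by norm_num) hr1
    have h12 : t1 ≠ t2 := by
      have : t1 < t2 := by linarith [ht1.2, ht2.1, hα]
      exact ne_of_lt this
    have h13 : t1 ≠ t3 := by
      have : t1 < t3 := by linarith [ht1.2, ht3.1, hα, h4α1]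
      exact ne_of_lt this
    have h23 : t2 ≠ t3 := by
      have : t2 < t3 := by linarith [ht2.2, ht3.1, h4α1]
      exact ne_of_lt this
    have hF := vieta_web m x₀ t1 t2 t3 hm hx₀ h12 h13 h23 hP
    have hr2' : r ^ 2 = (1 - m ^ 2 + m ^ 2 * x₀ ^ 2) * r + m ^ 2 := by
      rw [← hKdef, ← hSdef]; exact hr2
    have key := key_ident m x₀ r (t1 ^ 2) (t2 ^ 2) (t3 ^ 2) hr2'
      (by linear_combination hF)
    have hrp_eq : 1 - m ^ 2 + m ^ 2 * x₀ ^ 2 - r = rp := by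
      rw [hrpdef, hSdef, hKdef]
    rw [hrp_eq] at key
    obtain ⟨hu1p, hu1ε⟩ := sq_bound1 t1 ht1
    obtain ⟨hu2p, hu2ε⟩ := sq_bound2 t2 ht2
    have hu3r := sq_bound3 t3 ht3
    have p1 : 0 < r - t1 ^ 2 := by linarith [hu1ε]
    have p1' : 0 < t1 ^ 2 - rp := by linarith [hu1p]
    have p2 : 0 < r - t2 ^ 2 := by linarith [hu2ε]
    have p2' : 0 < t2 ^ 2 - rp := by linarith [hu2p]
    have p3 : 0 < t3 ^ 2 - r := by linarith
    have p3' : 0 < t3 ^ 2 - rp := by linarith [hu3r]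
    have hA1 : 0 < (r - t1 ^ 2) / (t1 ^ 2 - rp) := div_pos p1 p1'
    have hA2 : 0 < (r - t2 ^ 2) / (t2 ^ 2 - rp) := div_pos p2 p2'
    have hA3 : 0 < (t3 ^ 2 - r) / (t3 ^ 2 - rp) := div_pos p3 p3'
    have hA : (r - t1 ^ 2) / (t1 ^ 2 - rp) * ((r - t2 ^ 2) / (t2 ^ 2 - rp))
        * ((t3 ^ 2 - r) / (t3 ^ 2 - rp)) = cc := by
      rw [hccdef, div_mul_div_comm, div_mul_div_comm,
        div_eq_div_iff (ne_of_gt (mul_pos (mul_pos p1' p2') p3')) (ne_of_gt hcc_den_pos)]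
      linear_combination key
    have e1 : Real.log ((r - t1 ^ 2) / (t1 ^ 2 - rp))
        + Real.log ((r - t2 ^ 2) / (t2 ^ 2 - rp))
        = Real.log ((r - t1 ^ 2) / (t1 ^ 2 - rp) * ((r - t2 ^ 2) / (t2 ^ 2 - rp))) :=
      (Real.log_mul (ne_of_gt hA1) (ne_of_gt hA2)).symm
    have e2 : Real.log ((r - t1 ^ 2) / (t1 ^ 2 - rp) * ((r - t2 ^ 2) / (t2 ^ 2 - rp)))
        + Real.log ((t3 ^ 2 - r) / (t3 ^ 2 - rp))
        = Real.log ((r - t1 ^ 2) / (t1 ^ 2 - rp) * ((r - t2 ^ 2) / (t2 ^ 2 - rp))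
            * ((t3 ^ 2 - r) / (t3 ^ 2 - rp))) :=
      (Real.log_mul (ne_of_gt (mul_pos hA1 hA2)) (ne_of_gt hA3)).symm
    have e3 : Real.log ((r - t1 ^ 2) / (t1 ^ 2 - rp) * ((r - t2 ^ 2) / (t2 ^ 2 - rp))
        * ((t3 ^ 2 - r) / (t3 ^ 2 - rp))) = Real.log cc := by rw [hA]
    linarith [e1, e2, e3]
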